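/- arXiv:1512.01179 — 3 statements merged into one kernel-verified Lean document; each statement's English description precedes it below -/
import Mathlib

section
/- Let f ∈ L¹(ℝ) or f ∈ L^∞(ℝ), and suppose that at some x₀ ∈ ℝ both one-sided limits f(x₀−) = lim_{x→x₀⁻} f(x) and f(x₀+) = lim_{x→x₀⁺} f(x) exist. Then lim_{θ→0⁺} (P_θ * f)(x₀) = (f(x₀+) + f(x₀−))/2, where P_θ is the Poisson kernel. -/
open MeasureTheory Filter Topology Real

open Set MeasureTheory Filter Topology Real
open scoped ENNReal NNReal

/-- The Poisson kernel on `ℝ`: `P θ t = θ / (π (θ² + t²))`. -/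
noncomputable def poissonKernelℝ (θ t : ℝ) : ℝ := θ / (π * (θ ^ 2 + t ^ 2))

lemma pk_nonneg {θ : ℝ} (hθ : 0 < θ) (y : ℝ) : 0 ≤ poissonKernelℝ θ y :=
  div_nonneg hθ.le (by positivity)

lemma pk_even {θ : ℝ} (y : ℝ) : poissonKernelℝ θ (-y) = poissonKernelℝ θ y := by
  simp [poissonKernelℝ]

lemma pk_continuous {θ : ℝ} (hθ : 0 < θ) : Continuous (poissonKernelℝ θ) :=
  continuous_const.div (by fun_prop) (fun y => by positivity)

lemma pk_le {θ : ℝ} (hθ : 0 < θ) (y : ℝ) : poissonKernelℝ θ y ≤ 1 / (π * θ) := by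
  rw [poissonKernelℝ, div_le_div_iff₀ (by positivity) (by positivity)]
  nlinarith [sq_nonneg y, pi_pos]

lemma pk_hasDerivAt {θ : ℝ} (hθ : 0 < θ) (y : ℝ) :
    HasDerivAt (fun t => arctan (t / θ) / π) (poissonKernelℝ θ y) y := by
  have h1 : HasDerivAt (fun t : ℝ => t / θ) (1 / θ) y := by
    simpa using (hasDerivAt_id y).div_const θ
  have h2 := (Real.hasDerivAt_arctan (y / θ)).comp y h1
  have h3 := h2.div_const π
  refine h3.congr_deriv ?_
  rw [poissonKernelℝ]
  field_simp
lemma pk_tendsto_atTop {θ : ℝ} (hθ : 0 < θ) :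
    Tendsto (fun y => arctan (y / θ) / π) atTop (𝓝 (1 / 2)) := by
  have h1 : Tendsto (fun y : ℝ => y / θ) atTop atTop :=
    tendsto_id.atTop_div_const hθ
  have h2 : Tendsto (fun y => arctan (y / θ)) atTop (𝓝 (π / 2)) :=
    (tendsto_arctan_atTop.mono_right nhdsWithin_le_nhds).comp h1
  rw [show (1:ℝ)/2 = π/2/π by field_simp]
  exact h2.div_const π

lemma pk_integrableOn_Ioi {θ : ℝ} (hθ : 0 < θ) (a : ℝ) :
    IntegrableOn (poissonKernelℝ θ) (Ioi a) :=
  integrableOn_Ioi_deriv_of_nonneg' (fun x _ => pk_hasDerivAt hθ x)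
    (fun x _ => pk_nonneg hθ x) (pk_tendsto_atTop hθ)

lemma pk_integral_Ioi {θ : ℝ} (hθ : 0 < θ) (a : ℝ) :
    ∫ y in Ioi a, poissonKernelℝ θ y = 1 / 2 - arctan (a / θ) / π :=
  integral_Ioi_of_hasDerivAt_of_nonneg' (fun x _ => pk_hasDerivAt hθ x)
    (fun x _ => pk_nonneg hθ x) (pk_tendsto_atTop hθ)

lemma pk_integrableOn_Iic {θ : ℝ} (hθ : 0 < θ) (a : ℝ) :
    IntegrableOn (poissonKernelℝ θ) (Iic a) := by
  have m : MeasurableEmbedding fun x : ℝ => -x :=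
    (Homeomorph.neg ℝ).measurableEmbedding
  have hpre : (fun x : ℝ => -x) ⁻¹' Iic a = Ici (-a) := by ext x; simp [neg_le]
  rw [IntegrableOn, ← Measure.map_neg_eq_self (volume : Measure ℝ),
    Measure.restrict_map measurable_neg measurableSet_Iic, m.integrable_map_iff, hpre]
  simp only [Function.comp_def, pk_even]
  exact Iff.mpr integrableOn_Ici_iff_integrableOn_Ioi (pk_integrableOn_Ioi hθ (-a))

lemma pk_integrable {θ : ℝ} (hθ : 0 < θ) : Integrable (poissonKernelℝ θ) := by
  rw [← integrableOn_univ, ← Set.Iic_union_Ioi (a := (0:ℝ))]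
  exact (pk_integrableOn_Iic hθ 0).union (pk_integrableOn_Ioi hθ 0)

lemma pk_integral_Iic {θ : ℝ} (hθ : 0 < θ) (a : ℝ) :
    ∫ y in Iic a, poissonKernelℝ θ y = 1 / 2 - arctan (-a / θ) / π := by
  have h := integral_comp_neg_Iic a (poissonKernelℝ θ)
  simp_rw [pk_even] at h
  rw [h, pk_integral_Ioi hθ]

lemma arctan_inv_tendsto : Tendsto (fun θ : ℝ => arctan θ⁻¹) (𝓝[>] 0) (𝓝 (π / 2)) :=
  (tendsto_arctan_atTop.mono_right nhdsWithin_le_nhds).comp tendsto_inv_nhdsGT_zero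

lemma pk_split {θ : ℝ} (hθ : 0 < θ) :
    ∫ y in Ioc (0:ℝ) 1, poissonKernelℝ θ y = arctan θ⁻¹ / π := by
  have hsplit : (∫ y in Ioc (0:ℝ) 1, poissonKernelℝ θ y) + ∫ y in Ioi (1:ℝ), poissonKernelℝ θ y
      = ∫ y in Ioi (0:ℝ), poissonKernelℝ θ y := by
    rw [← setIntegral_union (Ioc_disjoint_Ioi le_rfl) measurableSet_Ioi
      ((pk_integrableOn_Ioi hθ 0).mono_set Ioc_subset_Ioi_self) (pk_integrableOn_Ioi hθ 1),
      Ioc_union_Ioi_eq_Ioi zero_le_one]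
  have h0 := pk_integral_Ioi hθ 0
  have h1 := pk_integral_Ioi hθ 1
  rw [h0, h1] at hsplit
  have : arctan (0 / θ) = 0 := by simp
  rw [this] at hsplit
  have h1θ : (1:ℝ) / θ = θ⁻¹ := one_div θ
  rw [h1θ] at hsplit
  rw [zero_div, sub_zero] at hsplit
  linarith [hsplit]

lemma pk_mass :
    Tendsto (fun θ : ℝ => ∫ y in Ioc (0:ℝ) 1, 2 * poissonKernelℝ θ y) (𝓝[>] 0) (𝓝 1) := by
  have heq : ∀ᶠ θ in 𝓝[>] (0:ℝ),
      2 * (arctan θ⁻¹ / π) = ∫ y in Ioc (0:ℝ) 1, 2 * poissonKernelℝ θ y := by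
    filter_upwards [self_mem_nhdsWithin] with θ (hθ : 0 < θ)
    rw [integral_const_mul, pk_split hθ]
  have hlim : Tendsto (fun θ : ℝ => 2 * (arctan θ⁻¹ / π)) (𝓝[>] 0) (𝓝 1) := by
    have := (arctan_inv_tendsto.div_const π).const_mul 2
    rwa [show 2 * (π / 2 / π) = 1 by field_simp] at this
  exact hlim.congr' heq

lemma pk_half {g : ℝ → ℂ} (hg : IntegrableOn g (Ioi 0)) {a : ℂ}
    (hga : Tendsto g (𝓝[>] (0:ℝ)) (𝓝 a)) :
    Tendsto (fun θ : ℝ => ∫ y in Ioi (0:ℝ), (poissonKernelℝ θ y : ℂ) * g y)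
      (𝓝[>] 0) (𝓝 (a / 2)) := by
  have key : Tendsto (fun θ : ℝ => ∫ y in Ioi (0:ℝ), (2 * poissonKernelℝ θ y) • g y)
      (𝓝[>] 0) (𝓝 a) := by
    apply tendsto_setIntegral_peak_smul_of_integrableOn_of_tendsto (x₀ := (0:ℝ))
      measurableSet_Ioi measurableSet_Ioc Ioc_subset_Ioi_self
    · exact mem_nhdsWithin.mpr
        ⟨Iio 1, isOpen_Iio, by norm_num, fun y hy => ⟨hy.2, le_of_lt hy.1⟩⟩
    · simp [Real.volume_Ioc]
    · filter_upwards [self_mem_nhdsWithin] with θ (hθ : 0 < θ)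
      exact fun y _ => mul_nonneg (by norm_num) (pk_nonneg hθ y)
    · intro u hu h0u
      obtain ⟨ε, hε, hball⟩ := Metric.isOpen_iff.mp hu 0 h0u
      rw [Metric.tendstoUniformlyOn_iff]
      intro δ hδ
      have hc : (0:ℝ) < π * ε ^ 2 * δ / 4 := by positivity
      filter_upwards [Ioo_mem_nhdsGT_of_mem (Set.mem_Ico.mpr ⟨le_rfl, hc⟩)]
        with θ hθ y hy
      have hθ0 : 0 < θ := hθ.1
      have hy0 : 0 < y := hy.1
      have hyε : ε ≤ y := by
        by_contra hlt
        push_neg at hlt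
        refine hy.2 (hball ?_)
        simp only [Metric.mem_ball, Real.dist_eq, sub_zero, abs_of_nonneg hy0.le]
        exact hlt
      have hpk : poissonKernelℝ θ y ≤ θ / (π * ε ^ 2) := by
        rw [poissonKernelℝ]
        apply div_le_div_of_nonneg_left hθ0.le (by positivity)
        have : ε ^ 2 ≤ θ ^ 2 + y ^ 2 := by nlinarith
        nlinarith [pi_pos]
      have hlt : 2 * (θ / (π * ε ^ 2)) < δ := by
        rw [mul_div_assoc', div_lt_iff₀ (by positivity)]
        nlinarith [hθ.2, pi_pos, sq_nonneg ε]
      have hnn : 0 ≤ 2 * poissonKernelℝ θ y :=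
        mul_nonneg (by norm_num) (pk_nonneg hθ0 y)
      rw [Pi.zero_apply, dist_zero_left, Real.norm_eq_abs, abs_of_nonneg hnn]
      linarith [hpk]
    · exact pk_mass
    · filter_upwards [self_mem_nhdsWithin] with θ (hθ : 0 < θ)
      exact (continuous_const.mul (pk_continuous hθ)).aestronglyMeasurable
    · exact hg
    · exact hga
  have h2 : Tendsto (fun θ : ℝ => (2:ℂ)⁻¹ * ∫ y in Ioi (0:ℝ), (2 * poissonKernelℝ θ y) • g y)
      (𝓝[>] 0) (𝓝 ((2:ℂ)⁻¹ * a)) := key.const_mul _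
  have heq : (fun θ : ℝ => (2:ℂ)⁻¹ * ∫ y in Ioi (0:ℝ), (2 * poissonKernelℝ θ y) • g y)
      = fun θ : ℝ => ∫ y in Ioi (0:ℝ), (poissonKernelℝ θ y : ℂ) * g y := by
    funext θ
    have h3 : ∀ y : ℝ, (2 * poissonKernelℝ θ y) • g y
        = 2 * ((poissonKernelℝ θ y : ℂ) * g y) := by
      intro y
      rw [Complex.real_smul]
      push_cast
      ring
    simp_rw [h3, integral_const_mul]
    ring
  rw [heq] at h2
  have h4 : a / 2 = (2:ℂ)⁻¹ * a := by ring
  rwa [h4]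

lemma tendsto_sub_aux (x₀ : ℝ) : Tendsto (fun y : ℝ => x₀ - y) (𝓝[>] 0) (𝓝[<] x₀) := by
  apply tendsto_nhdsWithin_of_tendsto_nhds_of_eventually_within
  · have : Tendsto (fun y : ℝ => x₀ - y) (𝓝 0) (𝓝 (x₀ - 0)) :=
      (continuous_const.sub continuous_id).tendsto 0
    simpa using this.mono_left nhdsWithin_le_nhds
  · filter_upwards [self_mem_nhdsWithin] with y (hy : 0 < y)
    simpa using hy

lemma tendsto_add_aux (x₀ : ℝ) : Tendsto (fun y : ℝ => x₀ + y) (𝓝[>] 0) (𝓝[>] x₀) := by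
  apply tendsto_nhdsWithin_of_tendsto_nhds_of_eventually_within
  · have : Tendsto (fun y : ℝ => x₀ + y) (𝓝 0) (𝓝 (x₀ + 0)) :=
      (continuous_const.add continuous_id).tendsto 0
    simpa using this.mono_left nhdsWithin_le_nhds
  · filter_upwards [self_mem_nhdsWithin] with y (hy : 0 < y)
    simpa using hy

lemma pk_coe_norm {θ : ℝ} (hθ : 0 < θ) (y : ℝ) :
    ‖(poissonKernelℝ θ y : ℂ)‖ ≤ 1 / (π * θ) := by
  rw [Complex.norm_real, Real.norm_eq_abs, abs_of_nonneg (pk_nonneg hθ y)]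
  exact pk_le hθ y

lemma pk_mul_integrable {θ : ℝ} (hθ : 0 < θ) {g : ℝ → ℂ} (hg : Integrable g) :
    Integrable (fun y : ℝ => (poissonKernelℝ θ y : ℂ) * g y) :=
  hg.bdd_mul ((Complex.continuous_ofReal.comp (pk_continuous hθ)).aestronglyMeasurable)
    (Eventually.of_forall (pk_coe_norm hθ))

lemma poisson_L1 (f : ℝ → ℂ) (hf : Integrable f volume)
    (x₀ : ℝ) (fplus fminus : ℂ)
    (hminus : Tendsto f (𝓝[<] x₀) (𝓝 fminus))
    (hplus : Tendsto f (𝓝[>] x₀) (𝓝 fplus)) :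
    Tendsto (fun θ : ℝ => ∫ y : ℝ, (poissonKernelℝ θ y : ℂ) * f (x₀ - y))
      (𝓝[>] 0) (𝓝 ((fplus + fminus) / 2)) := by
  have hsub : Integrable (fun y : ℝ => f (x₀ - y)) := hf.comp_sub_left x₀
  have hadd : Integrable (fun y : ℝ => f (x₀ + y)) := hf.comp_add_left x₀
  have h1 := pk_half hsub.integrableOn (hminus.comp (tendsto_sub_aux x₀))
  have h2 := pk_half hadd.integrableOn (hplus.comp (tendsto_add_aux x₀))
  have hsum := h2.add h1
  rw [show (fplus + fminus) / 2 = fplus / 2 + fminus / 2 by ring]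
  apply hsum.congr'
  filter_upwards [self_mem_nhdsWithin] with θ (hθ : 0 < θ)
  have hInt : Integrable (fun y : ℝ => (poissonKernelℝ θ y : ℂ) * f (x₀ - y)) :=
    pk_mul_integrable hθ hsub
  have hflip : ∫ y in Iic (0:ℝ), (poissonKernelℝ θ y : ℂ) * f (x₀ - y)
      = ∫ y in Ioi (0:ℝ), (poissonKernelℝ θ y : ℂ) * f (x₀ + y) := by
    have h3 := integral_comp_neg_Iic (0:ℝ)
      (fun x : ℝ => (poissonKernelℝ θ (-x) : ℂ) * f (x₀ + x))
    simp only [neg_neg, neg_zero] at h3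
    simp_rw [pk_even, ← sub_eq_add_neg] at h3
    exact h3
  rw [← intervalIntegral.integral_Iic_add_Ioi (b := (0:ℝ)) hInt.integrableOn
    hInt.integrableOn, hflip]

/-- If `f ∈ L¹(ℝ)` or `f ∈ L^∞(ℝ)` and both one-sided limits `f(x₀-)` and `f(x₀+)` exist
at `x₀`, then `(P_θ * f)(x₀) → (f(x₀+) + f(x₀-))/2` as `θ → 0⁺`. -/
theorem poisson_fejer (f : ℝ → ℂ)
    (hf : Integrable f volume ∨ MemLp f ⊤ volume)
    (x₀ : ℝ) (fplus fminus : ℂ)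
    (hminus : Tendsto f (𝓝[<] x₀) (𝓝 fminus))
    (hplus : Tendsto f (𝓝[>] x₀) (𝓝 fplus)) :
    Tendsto (fun θ : ℝ => ∫ y : ℝ, (poissonKernelℝ θ y : ℂ) * f (x₀ - y))
      (𝓝[>] 0) (𝓝 ((fplus + fminus) / 2)) := by
  rcases hf with hf | hf
  · exact poisson_L1 f hf x₀ fplus fminus hminus hplus
  set I : Set ℝ := Ioo (x₀ - 1) (x₀ + 1) with hI
  set f₁ : ℝ → ℂ := I.indicator f with hf₁def
  have hf₁ : Integrable f₁ := by
    rw [hf₁def, integrable_indicator_iff measurableSet_Ioo]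
    have hres : MemLp f ⊤ (volume.restrict I) := hf.restrict I
    haveI : IsFiniteMeasure (volume.restrict I) := ⟨by
      rw [Measure.restrict_apply_univ, hI, Real.volume_Ioo]
      exact ENNReal.ofReal_lt_top⟩
    exact memLp_one_iff_integrable.mp (hres.mono_exponent le_top)
  have hmemI : I ∈ 𝓝 x₀ := Ioo_mem_nhds (by linarith) (by linarith)
  have hminus1 : Tendsto f₁ (𝓝[<] x₀) (𝓝 fminus) := by
    apply hminus.congr'
    filter_upwards [mem_nhdsWithin_of_mem_nhds hmemI] with y hy
    exact (Set.indicator_of_mem hy f).symm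
  have hplus1 : Tendsto f₁ (𝓝[>] x₀) (𝓝 fplus) := by
    apply hplus.congr'
    filter_upwards [mem_nhdsWithin_of_mem_nhds hmemI] with y hy
    exact (Set.indicator_of_mem hy f).symm
  have h1 := poisson_L1 f₁ hf₁ x₀ fplus fminus hminus1 hplus1
  set M : ℝ := (eLpNorm f ⊤ volume).toReal with hM
  have hM0 : 0 ≤ M := ENNReal.toReal_nonneg
  have htop : eLpNormEssSup f volume ≠ ⊤ := by
    rw [← eLpNorm_exponent_top]
    exact hf.2.ne
  have hbd : ∀ᵐ z : ℝ, ‖f z‖ ≤ M := by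
    filter_upwards [ae_le_eLpNormEssSup (f := f) (μ := volume)] with z hz
    have : ((‖f z‖₊ : ℝ≥0∞)).toReal ≤ M := by
      rw [hM, eLpNorm_exponent_top]
      exact ENNReal.toReal_mono htop hz
    simpa using this
  set f₂ : ℝ → ℂ := fun z => f z - f₁ z with hf₂def
  have hf₂0 : ∀ z ∈ I, f₂ z = 0 := fun z hz => by
    simp [hf₂def, hf₁def, Set.indicator_of_mem hz]
  have hf₂bd : ∀ᵐ z : ℝ, ‖f₂ z‖ ≤ M := by
    filter_upwards [hbd] with z hz
    by_cases h : z ∈ I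
    · simp [hf₂0 z h, hM0]
    · simpa [hf₂def, hf₁def, Set.indicator_of_notMem h] using hz
  have hmp : MeasurePreserving (fun y : ℝ => x₀ - y) volume volume :=
    Measure.measurePreserving_sub_left volume x₀
  have hbd' : ∀ᵐ y : ℝ, ‖f₂ (x₀ - y)‖ ≤ M := hmp.quasiMeasurePreserving.ae hf₂bd
  have hf₂m : AEStronglyMeasurable f₂ volume :=
    hf.1.sub (hf.1.indicator measurableSet_Ioo)
  have hf₂m' : AEStronglyMeasurable (fun y : ℝ => f₂ (x₀ - y)) volume :=
    hf₂m.comp_quasiMeasurePreserving hmp.quasiMeasurePreserving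
  set E : Set ℝ := Iic (-1) ∪ Ici 1 with hE
  have hEmeas : MeasurableSet E := measurableSet_Iic.union measurableSet_Ici
  -- tail tendsto zero
  have hc : Tendsto (fun θ : ℝ => M * (1 - 2 * (arctan θ⁻¹ / π))) (𝓝[>] 0) (𝓝 0) := by
    have h := (((arctan_inv_tendsto.div_const π).const_mul 2).const_sub 1).const_mul M
    rwa [show M * (1 - 2 * (π / 2 / π)) = 0 by field_simp; norm_num] at h
  have hBtend : Tendsto (fun θ : ℝ => ∫ y : ℝ, (poissonKernelℝ θ y : ℂ) * f₂ (x₀ - y))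
      (𝓝[>] 0) (𝓝 0) := by
    apply squeeze_zero_norm' _ hc
    filter_upwards [self_mem_nhdsWithin] with θ (hθ : 0 < θ)
    have hEint : IntegrableOn (poissonKernelℝ θ) E := by
      apply (pk_integrableOn_Iic hθ (-1)).union
      exact Iff.mpr integrableOn_Ici_iff_integrableOn_Ioi (pk_integrableOn_Ioi hθ 1)
    have hgint : Integrable (fun y : ℝ => M * E.indicator (poissonKernelℝ θ) y) :=
      ((integrable_indicator_iff hEmeas).mpr hEint).const_mul M
    have hbound : ∀ᵐ y : ℝ, ‖(poissonKernelℝ θ y : ℂ) * f₂ (x₀ - y)‖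
        ≤ M * E.indicator (poissonKernelℝ θ) y := by
      filter_upwards [hbd'] with y hy
      by_cases hcase : y ∈ E
      · rw [Set.indicator_of_mem hcase, norm_mul, Complex.norm_real, Real.norm_eq_abs,
          abs_of_nonneg (pk_nonneg hθ y)]
        calc poissonKernelℝ θ y * ‖f₂ (x₀ - y)‖ ≤ poissonKernelℝ θ y * M :=
              mul_le_mul_of_nonneg_left hy (pk_nonneg hθ y)
          _ = M * poissonKernelℝ θ y := mul_comm _ _
      · rw [Set.indicator_of_notMem hcase, mul_zero]
        have hyI : x₀ - y ∈ I := by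
          simp only [hE, Set.mem_union, Set.mem_Iic, Set.mem_Ici, not_or, not_le] at hcase
          exact Set.mem_Ioo.mpr ⟨by linarith [hcase.2], by linarith [hcase.1]⟩
        rw [hf₂0 _ hyI, mul_zero, norm_zero]
    have hle := norm_integral_le_of_norm_le hgint hbound
    refine hle.trans (le_of_eq ?_)
    rw [integral_const_mul, integral_indicator hEmeas]
    have hsplitE : ∫ y in E, poissonKernelℝ θ y
        = (∫ y in Iic (-1:ℝ), poissonKernelℝ θ y) + ∫ y in Ici (1:ℝ), poissonKernelℝ θ y := by
      rw [hE]
      exact setIntegral_union (Iic_disjoint_Ici.mpr (by norm_num)) measurableSet_Ici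
        (pk_integrableOn_Iic hθ (-1))
        (Iff.mpr integrableOn_Ici_iff_integrableOn_Ioi (pk_integrableOn_Ioi hθ 1))
    rw [hsplitE, integral_Ici_eq_integral_Ioi, pk_integral_Iic hθ, pk_integral_Ioi hθ]
    rw [show -(-1:ℝ) / θ = θ⁻¹ by field_simp, show (1:ℝ) / θ = θ⁻¹ by field_simp]
    ring
  have hsum := h1.add hBtend
  rw [add_zero] at hsum
  apply hsum.congr'
  filter_upwards [self_mem_nhdsWithin] with θ (hθ : 0 < θ)
  have hA : Integrable (fun y : ℝ => (poissonKernelℝ θ y : ℂ) * f₁ (x₀ - y)) :=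
    pk_mul_integrable hθ (hf₁.comp_sub_left x₀)
  have hB : Integrable (fun y : ℝ => (poissonKernelℝ θ y : ℂ) * f₂ (x₀ - y)) := by
    have h := Integrable.bdd_mul (c := M) (pk_integrable hθ).ofReal hf₂m' hbd'
    exact h.congr (Eventually.of_forall fun y => mul_comm _ _)
  rw [← integral_add hA hB]
  congr 1
  funext y
  rw [hf₂def]
  ring
end

section
/- Fix λ ∈ (0,1) and d ≥ 1. For k = (k_1,…,k_d) ∈ {0,1}^d let J_k = ∏_{l=1}^d J_{k_l} ⊆ ℝ^d, where J_0 = (−∞,0) and J_1 = [0,∞). If f ∈ L¹(ℝ^d) or f ∈ L^∞(ℝ^d) and x ∈ ℝ^d are such that for every k ∈ {0,1}^d the limit f(x,J_k) := lim_{y→0, y∈J_k} f(x−y) exists, then lim_{θ→0⁺} (W_{θ,λ}^d * f)(x) = Σ_{k∈{0,1}^d} (∏_{j=1}^d λ^{1−k_j}(1−λ)^{k_j}) f(x,J_k). -/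
open MeasureTheory Filter Topology Real

/-- The Wigner semicircle kernel on `ℝ`: `W θ t = (2/(πθ²))√(θ² - t²)` for `-θ ≤ t ≤ θ`
and `0` otherwise. (In Lean `Real.sqrt` of a negative number is `0`, so this single formula
agrees with the piecewise definition.) -/
noncomputable def wigner (θ t : ℝ) : ℝ := 2 / (π * θ ^ 2) * Real.sqrt (θ ^ 2 - t ^ 2)

/-- The two half-lines `J_0 = (-∞,0)` and `J_1 = [0,∞)`. -/
def halfLine : Fin 2 → Set ℝ := ![Set.Iio 0, Set.Ici 0]

/-- The orthant `J_k = ∏_l J_{k_l} ⊆ ℝ^d` for `k ∈ {0,1}^d`. -/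
def orthant (d : ℕ) (k : Fin d → Fin 2) : Set (Fin d → ℝ) :=
  {y | ∀ j, y j ∈ halfLine (k j)}

lemma wigner_nonneg {θ : ℝ} (hθ : 0 < θ) (t : ℝ) : 0 ≤ wigner θ t := by
  unfold wigner
  have : 0 ≤ 2 / (π * θ ^ 2) := by positivity
  exact mul_nonneg this (Real.sqrt_nonneg _)

lemma wigner_eq_zero {θ t : ℝ} (hθ : 0 ≤ θ) (h : θ ≤ |t|) : wigner θ t = 0 := by
  unfold wigner
  have h2 : θ ^ 2 - t ^ 2 ≤ 0 := by
    have := abs_nonneg t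
    nlinarith [sq_abs t]
  rw [Real.sqrt_eq_zero'.2 h2, mul_zero]

lemma wigner_continuous (θ : ℝ) : Continuous (wigner θ) := by
  unfold wigner
  exact continuous_const.mul ((continuous_const.sub (continuous_pow 2)).sqrt)

lemma wigner_integral {θ : ℝ} (hθ : 0 < θ) : ∫ t, wigner θ t = 1 := by
  have hsupp : ∀ t ∉ Set.Icc (-θ) θ, wigner θ t = 0 := by
    intro t ht
    apply wigner_eq_zero hθ.le
    rw [Set.mem_Icc, not_and_or, not_le, not_le] at ht
    rcases ht with h | h
    · calc θ ≤ -t := by linarith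
        _ ≤ |t| := (neg_le_abs t)
    · exact h.le.trans (le_abs_self t)
  have key : ∫ s in (-1:ℝ)..1, Real.sqrt (θ ^ 2 - (θ * s) ^ 2)
      = θ⁻¹ • ∫ t in (θ * (-1))..(θ * 1), Real.sqrt (θ ^ 2 - t ^ 2) :=
    intervalIntegral.integral_comp_mul_left (fun t => Real.sqrt (θ ^ 2 - t ^ 2)) hθ.ne'
  have hval : ∀ s : ℝ, Real.sqrt (θ ^ 2 - (θ * s) ^ 2) = θ * Real.sqrt (1 - s ^ 2) := by
    intro s
    have : θ ^ 2 - (θ * s) ^ 2 = θ ^ 2 * (1 - s ^ 2) := by ring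
    rw [this, Real.sqrt_mul (sq_nonneg θ), Real.sqrt_sq hθ.le]
  have lhs : ∫ s in (-1:ℝ)..1, Real.sqrt (θ ^ 2 - (θ * s) ^ 2) = θ * (π / 2) := by
    simp_rw [hval]
    rw [intervalIntegral.integral_const_mul, integral_sqrt_one_sub_sq]
  have hA : ∫ t in (-θ)..θ, Real.sqrt (θ ^ 2 - t ^ 2) = θ ^ 2 * (π / 2) := by
    have h1 : θ * (-1) = -θ := by ring
    have h2 : θ * 1 = θ := by ring
    rw [h1, h2] at key
    have := key.symm.trans lhs
    field_simp at this ⊢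
    rw [smul_eq_mul, one_div, inv_mul_eq_div, div_mul_eq_mul_div, div_eq_iff hθ.ne'] at this
    linear_combination this
  calc ∫ t, wigner θ t = ∫ t in Set.Icc (-θ) θ, wigner θ t :=
        (setIntegral_eq_integral_of_forall_compl_eq_zero hsupp).symm
    _ = ∫ t in Set.Ioc (-θ) θ, wigner θ t := integral_Icc_eq_integral_Ioc
    _ = ∫ t in (-θ)..θ, wigner θ t := (intervalIntegral.integral_of_le (by linarith)).symm
    _ = 2 / (π * θ ^ 2) * ∫ t in (-θ)..θ, Real.sqrt (θ ^ 2 - t ^ 2) := by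
        unfold wigner; rw [intervalIntegral.integral_const_mul]
    _ = 1 := by
        rw [hA]
        have hπ : π ≠ 0 := Real.pi_ne_zero
        field_simp

lemma wigner_shift_continuous (θ c : ℝ) : Continuous (fun t => wigner θ (t - c)) :=
  (wigner_continuous θ).comp (continuous_id.sub continuous_const)

lemma wigner_shift_compactSupport {θ : ℝ} (hθ : 0 < θ) (c : ℝ) :
    HasCompactSupport (fun t => wigner θ (t - c)) := by
  apply HasCompactSupport.intro (isCompact_Icc (a := c - θ) (b := c + θ))
  intro t ht
  apply wigner_eq_zero hθ.le
  rw [Set.mem_Icc, not_and_or, not_le, not_le] at ht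
  rcases ht with h | h
  · calc θ ≤ -(t - c) := by linarith
      _ ≤ |t - c| := neg_le_abs _
  · calc θ ≤ t - c := by linarith
      _ ≤ |t - c| := le_abs_self _

lemma wigner_shift_integrable {θ : ℝ} (hθ : 0 < θ) (c : ℝ) :
    Integrable (fun t => wigner θ (t - c)) :=
  (wigner_shift_continuous θ c).integrable_of_hasCompactSupport (wigner_shift_compactSupport hθ c)

lemma wigner_shift_integral {θ : ℝ} (hθ : 0 < θ) (c : ℝ) :
    ∫ t, wigner θ (t - c) = 1 := by
  rw [integral_sub_right_eq_self (wigner θ) c]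
  exact wigner_integral hθ

lemma halfLine_measurable (i : Fin 2) : MeasurableSet (halfLine i) := by
  fin_cases i
  · exact measurableSet_Iio
  · exact measurableSet_Ici

lemma orthant_measurable (d : ℕ) (k : Fin d → Fin 2) : MeasurableSet (orthant d k) := by
  have : orthant d k = ⋂ j, (fun y : Fin d → ℝ => y j) ⁻¹' halfLine (k j) := by
    ext y; simp [orthant]
  rw [this]
  exact MeasurableSet.iInter fun j => (measurable_pi_apply j) (halfLine_measurable (k j))

lemma halfLine_disjoint {i i' : Fin 2} (h : i ≠ i') : Disjoint (halfLine i) (halfLine i') := by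
  fin_cases i <;> fin_cases i' <;> simp_all [halfLine] <;>
    exact Set.disjoint_left.2 (fun t ht ht' => absurd ht' (by simp_all [Set.mem_Iio, Set.mem_Ici]; linarith))

lemma orthant_disjoint (d : ℕ) : Pairwise (Function.onFun Disjoint (orthant d)) := by
  intro k k' hkk'
  obtain ⟨j, hj⟩ := Function.ne_iff.1 hkk'
  refine Set.disjoint_left.2 fun y hy hy' => ?_
  exact Set.disjoint_left.1 (halfLine_disjoint hj) (hy j) (hy' j)

lemma orthant_cover (d : ℕ) : ⋃ k, orthant d k = Set.univ := by
  ext y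
  simp only [Set.mem_iUnion, Set.mem_univ, iff_true]
  refine ⟨fun j => if y j < 0 then 0 else 1, fun j => ?_⟩
  by_cases h : y j < 0
  · simp [halfLine, h]
  · simp [halfLine, h, le_of_not_gt h]

lemma integral_orthant_sum {d : ℕ} {E : Type*} [NormedAddCommGroup E] [NormedSpace ℝ E]
    {h : (Fin d → ℝ) → E} (hh : Integrable h) :
    ∫ y, h y = ∑ k : Fin d → Fin 2, ∫ y in orthant d k, h y := by
  rw [← setIntegral_univ, ← orthant_cover d,
    integral_iUnion (orthant_measurable d) (orthant_disjoint d)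
      ((orthant_cover d) ▸ hh.integrableOn), tsum_fintype]

lemma setIntegral_orthant_prod {d : ℕ} (g : ℝ → ℝ) (k : Fin d → Fin 2) :
    ∫ y in orthant d k, ∏ j, g (y j) = ∏ j, ∫ t in halfLine (k j), g t := by
  rw [← integral_indicator (orthant_measurable d k)]
  have hpt : ∀ y : Fin d → ℝ, (orthant d k).indicator (fun y => ∏ j, g (y j)) y
      = ∏ j, ((halfLine (k j)).indicator g) (y j) := by
    intro y
    by_cases hy : y ∈ orthant d k
    · rw [Set.indicator_of_mem hy]
      exact Finset.prod_congr rfl fun j _ => (Set.indicator_of_mem (hy j) g).symm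
    · rw [Set.indicator_of_notMem hy]
      obtain ⟨j, hj⟩ := not_forall.1 hy
      exact (Finset.prod_eq_zero (Finset.mem_univ j)
        (Set.indicator_of_notMem hj g)).symm
  simp_rw [hpt]
  rw [volume_pi, MeasureTheory.integral_fintype_prod_eq_prod
    (fun j t => ((halfLine (k j)).indicator g) t)]
  exact Finset.prod_congr rfl fun j _ => integral_indicator (halfLine_measurable (k j))

/-- Fejér-type theorem for the shifted Wigner semicircle kernels on `ℝ^d`: fix `λ ∈ (0,1)`
and shifts `c θ` with `∫_{(-∞,0)} W_θ(t - c θ) dt = λ`, and set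
`W_{θ,λ}(t) = W_θ(t - c θ)`, `W_{θ,λ}^d(x) = ∏_j W_{θ,λ}(x_j)`.
If `f ∈ L¹(ℝ^d)` or `f ∈ L^∞(ℝ^d)` and all `2^d` orthant limits
`f(x, J_k) = lim_{y→0, y ∈ J_k} f(x-y)` exist, then
`(W_{θ,λ}^d * f)(x) → ∑_k (∏_j λ^{1-k_j}(1-λ)^{k_j}) f(x, J_k)` as `θ → 0⁺`. -/
theorem wigner_fejer_pi (lam : ℝ) (hlam : lam ∈ Set.Ioo (0 : ℝ) 1)
    (d : ℕ) (hd : 1 ≤ d)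
    (c : ℝ → ℝ)
    (hc : ∀ θ > (0 : ℝ), (∫ t in Set.Iio (0 : ℝ), wigner θ (t - c θ)) = lam)
    (f : (Fin d → ℝ) → ℂ)
    (hf : Integrable f volume ∨ MemLp f ⊤ volume)
    (x : Fin d → ℝ) (L : (Fin d → Fin 2) → ℂ)
    (hL : ∀ k : Fin d → Fin 2,
      Tendsto (fun y => f (x - y)) (𝓝[orthant d k] 0) (𝓝 (L k))) :
    Tendsto (fun θ : ℝ => ∫ y, ((∏ j, wigner θ (y j - c θ) : ℝ) : ℂ) * f (x - y))
      (𝓝[>] 0)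
      (𝓝 (∑ k : Fin d → Fin 2,
        ((∏ j, lam ^ (1 - (k j : ℕ)) * (1 - lam) ^ (k j : ℕ) : ℝ) : ℂ) * L k)) := by
  obtain ⟨hlam0, hlam1⟩ := hlam
  -- shift bound
  have hcθ : ∀ θ > (0 : ℝ), |c θ| < θ := by
    intro θ hθ
    by_contra hcon
    push_neg at hcon
    rcases le_abs.1 hcon with h | h
    · -- c θ ≥ θ : kernel vanishes on Iio 0
      have hz : ∫ t in Set.Iio (0:ℝ), wigner θ (t - c θ) = 0 := by
        apply setIntegral_eq_zero_of_forall_eq_zero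
        intro t ht
        apply wigner_eq_zero hθ.le
        have : t < 0 := ht
        calc θ ≤ -(t - c θ) := by linarith
          _ ≤ |t - c θ| := neg_le_abs _
      rw [hc θ hθ] at hz; linarith
    · -- c θ ≤ -θ : kernel vanishes on Ici 0
      have hz : ∫ t in Set.Ici (0:ℝ), wigner θ (t - c θ) = 0 := by
        apply setIntegral_eq_zero_of_forall_eq_zero
        intro t ht
        apply wigner_eq_zero hθ.le
        have : (0:ℝ) ≤ t := ht
        calc θ ≤ t - c θ := by linarith
          _ ≤ |t - c θ| := le_abs_self _
      have hsplit := intervalIntegral.integral_Iio_add_Ici (b := (0:ℝ))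
        ((wigner_shift_integrable hθ (c θ)).integrableOn)
        ((wigner_shift_integrable hθ (c θ)).integrableOn)
      rw [hc θ hθ, hz, wigner_shift_integral hθ (c θ)] at hsplit
      linarith
  have hIci : ∀ θ > (0:ℝ), ∫ t in Set.Ici (0:ℝ), wigner θ (t - c θ) = 1 - lam := by
    intro θ hθ
    have hsplit := intervalIntegral.integral_Iio_add_Ici (b := (0:ℝ))
      ((wigner_shift_integrable hθ (c θ)).integrableOn)
      ((wigner_shift_integrable hθ (c θ)).integrableOn)
    rw [hc θ hθ, wigner_shift_integral hθ (c θ)] at hsplit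
    linarith
  -- half-line integrals as weights
  have hHL : ∀ θ > (0:ℝ), ∀ i : Fin 2,
      ∫ t in halfLine i, wigner θ (t - c θ) = lam ^ (1 - (i:ℕ)) * (1 - lam) ^ (i:ℕ) := by
    intro θ hθ i
    fin_cases i
    · simpa [halfLine] using hc θ hθ
    · simpa [halfLine] using hIci θ hθ
  -- weights
  set W : (Fin d → Fin 2) → ℝ :=
    fun k => ∏ j, lam ^ (1 - (k j : ℕ)) * (1 - lam) ^ (k j : ℕ) with hW
  have hWnonneg : ∀ k, 0 ≤ W k := by
    intro k
    apply Finset.prod_nonneg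
    intro j _
    exact mul_nonneg (pow_nonneg hlam0.le _) (pow_nonneg (by linarith) _)
  have hWle1 : ∀ k, W k ≤ 1 := by
    intro k
    apply Finset.prod_le_one
    · intro j _
      exact mul_nonneg (pow_nonneg hlam0.le _) (pow_nonneg (by linarith) _)
    · intro j _
      have h1 : lam ^ (1 - (k j : ℕ)) ≤ 1 :=
        pow_le_one₀ hlam0.le hlam1.le
      have h2 : (1 - lam) ^ ((k j : ℕ)) ≤ 1 :=
        pow_le_one₀ (by linarith) (by linarith)
      calc lam ^ (1 - (k j : ℕ)) * (1 - lam) ^ (k j : ℕ)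
          ≤ 1 * 1 := mul_le_mul h1 h2 (pow_nonneg (by linarith) _) zero_le_one
        _ = 1 := by norm_num
  -- the target sum
  set S : ℂ := ∑ k : Fin d → Fin 2, ((W k : ℝ) : ℂ) * L k with hS
  -- kernel facts for fixed θ
  have hf_meas : AEStronglyMeasurable f volume := by
    rcases hf with hf | hf
    · exact hf.aestronglyMeasurable
    · exact hf.aestronglyMeasurable
  have hqmp : Measure.QuasiMeasurePreserving (fun y : Fin d → ℝ => x - y) volume volume :=
    (Measure.measurePreserving_sub_left volume x).quasiMeasurePreserving
  have hfx_meas : AEStronglyMeasurable (fun y : Fin d → ℝ => f (x - y)) volume :=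
    hf_meas.comp_quasiMeasurePreserving hqmp
  rw [Metric.tendsto_nhdsWithin_nhds]
  intro ε hε
  set N : ℕ := Fintype.card (Fin d → Fin 2) with hN
  set ε' : ℝ := ε / (N + 1) with hε'def
  have hε' : 0 < ε' := by positivity
  -- δ from the orthant limits
  have hL' : ∀ k : Fin d → Fin 2, ∃ δ > 0, ∀ ⦃y : Fin d → ℝ⦄, y ∈ orthant d k →
      dist y 0 < δ → dist (f (x - y)) (L k) < ε' :=
    fun k => (Metric.tendsto_nhdsWithin_nhds.1 (hL k)) ε' hε'
  choose δk hδkpos hδk2 using hL'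
  have hne : Nonempty (Fin d → Fin 2) := inferInstance
  set δ0 : ℝ := Finset.univ.inf' (Finset.univ_nonempty) δk with hδ0
  have hδ0pos : 0 < δ0 := (Finset.lt_inf'_iff _).2 fun k _ => hδkpos k
  have hδ0le : ∀ k, δ0 ≤ δk k := fun k => Finset.inf'_le δk (Finset.mem_univ k)
  refine ⟨δ0 / 2, by positivity, ?_⟩
  intro θ hθmem hθdist
  have hθ : 0 < θ := hθmem
  have hθδ : 2 * θ < δ0 := by
    rw [Real.dist_eq, sub_zero, abs_of_pos hθ] at hθdist
    linarith
  -- kernel for this θ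
  set g : ℝ → ℝ := fun t => wigner θ (t - c θ) with hg
  set K : (Fin d → ℝ) → ℝ := fun y => ∏ j, g (y j) with hK
  have hgcont : Continuous g := wigner_shift_continuous θ (c θ)
  have hgint : Integrable g := wigner_shift_integrable hθ (c θ)
  have hgnn : ∀ t, 0 ≤ g t := fun t => wigner_nonneg hθ _
  have hKcont : Continuous K := continuous_finset_prod _ fun j _ => hgcont.comp (continuous_apply j)
  have hKnn : ∀ y, 0 ≤ K y := fun y => Finset.prod_nonneg fun j _ => hgnn _
  have hKsupp : HasCompactSupport K := by
    apply HasCompactSupport.intro (isCompact_univ_pi (fun _ => isCompact_Icc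
      (a := c θ - θ) (b := c θ + θ)))
    intro y hy
    rw [Set.mem_univ_pi, not_forall] at hy
    obtain ⟨j, hj⟩ := hy
    refine Finset.prod_eq_zero (Finset.mem_univ j) ?_
    apply wigner_eq_zero hθ.le
    rw [Set.mem_Icc, not_and_or, not_le, not_le] at hj
    rcases hj with h | h
    · calc θ ≤ -(y j - c θ) := by linarith
        _ ≤ |y j - c θ| := neg_le_abs _
    · calc θ ≤ y j - c θ := by linarith
        _ ≤ |y j - c θ| := le_abs_self _
  have hKint : Integrable K := hKcont.integrable_of_hasCompactSupport hKsupp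
  have hKCint : Integrable (fun y => ((K y : ℝ) : ℂ)) := hKint.ofReal
  have hKC_meas : AEStronglyMeasurable (fun y => ((K y : ℝ) : ℂ)) volume :=
    (Complex.continuous_ofReal.comp hKcont).aestronglyMeasurable
  -- main integrand is integrable
  have hFint : Integrable (fun y => ((K y : ℝ) : ℂ) * f (x - y)) := by
    rcases hf with hf | hf
    · obtain ⟨C, hC⟩ := hKcont.bounded_above_of_compact_support hKsupp
      exact Integrable.bdd_mul (c := C) (hf.comp_sub_left x) hKC_meas
        (Eventually.of_forall fun y => by simpa [Complex.norm_real] using hC y)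
    · have hfin : eLpNormEssSup f volume < ⊤ := by
        have := hf.2
        rwa [eLpNorm_exponent_top] at this
      set C : ℝ := (eLpNormEssSup f volume).toReal with hC
      have hbd : ∀ᵐ z : Fin d → ℝ, ‖f z‖ ≤ C := by
        filter_upwards [ae_le_eLpNormEssSup (f := f) (μ := volume)] with z hz
        have := ENNReal.toReal_mono hfin.ne hz
        simpa [hC] using this
      have hbd' : ∀ᵐ y : Fin d → ℝ, ‖f (x - y)‖ ≤ C := hqmp.ae hbd
      have := Integrable.bdd_mul (c := C) hKCint hfx_meas hbd'
      simpa [mul_comm] using this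
  -- weights via set integrals
  have hWint : ∀ k : Fin d → Fin 2, ∫ y in orthant d k, K y = W k := by
    intro k
    rw [hK]
    rw [setIntegral_orthant_prod g k]
    exact Finset.prod_congr rfl fun j _ => hHL θ hθ (k j)
  -- split the integral over orthants
  have hsplit : ∫ y, ((K y : ℝ) : ℂ) * f (x - y)
      = ∑ k : Fin d → Fin 2, ∫ y in orthant d k, ((K y : ℝ) : ℂ) * f (x - y) :=
    integral_orthant_sum hFint
  have hSsum : S = ∑ k : Fin d → Fin 2, ∫ y in orthant d k, ((K y : ℝ) : ℂ) * L k := by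
    rw [hS]
    refine Finset.sum_congr rfl fun k _ => ?_
    have h1 : ∫ y in orthant d k, ((K y : ℝ) : ℂ) = ((W k : ℝ) : ℂ) := by
      rw [← hWint k]; exact integral_ofReal
    rw [integral_mul_const, h1]
  rw [Real.dist_eq] at hθdist
  rw [dist_eq_norm]
  have hdiff : (∫ y, ((K y : ℝ) : ℂ) * f (x - y)) - S
      = ∑ k : Fin d → Fin 2, ∫ y in orthant d k,
          ((K y : ℝ) : ℂ) * (f (x - y) - L k) := by
    rw [hsplit, hSsum, ← Finset.sum_sub_distrib]
    refine Finset.sum_congr rfl fun k _ => ?_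
    rw [← integral_sub (hFint.integrableOn) ((hKCint.mul_const (L k)).integrableOn)]
    congr 1
    ext y
    ring
  rw [hdiff]
  -- bound each orthant term
  have hterm : ∀ k : Fin d → Fin 2,
      ‖∫ y in orthant d k, ((K y : ℝ) : ℂ) * (f (x - y) - L k)‖ ≤ ε' * W k := by
    intro k
    have hgK : Integrable (fun y => ε' * K y) (volume.restrict (orthant d k)) :=
      (hKint.integrableOn).const_mul ε'
    have hbound : ∀ᵐ y ∂(volume.restrict (orthant d k)),
        ‖((K y : ℝ) : ℂ) * (f (x - y) - L k)‖ ≤ ε' * K y := by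
      rw [ae_restrict_iff' (orthant_measurable d k)]
      refine Eventually.of_forall fun y hy => ?_
      rcases eq_or_ne (K y) 0 with h0 | h0
      · simp [h0]
      · have hyj : ∀ j, wigner θ (y j - c θ) ≠ 0 := by
          intro j hj
          exact h0 (Finset.prod_eq_zero (Finset.mem_univ j) hj)
        have hynorm : ‖y‖ < 2 * θ := by
          rw [pi_norm_lt_iff (by linarith)]
          intro j
          have : ¬ (θ ≤ |y j - c θ|) := fun h => hyj j (wigner_eq_zero hθ.le h)
          push_neg at this
          have hc' := hcθ θ hθ
          calc ‖y j‖ = |y j| := rfl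
            _ ≤ |y j - c θ| + |c θ| := by
                have := abs_sub_abs_le_abs_sub (y j) (c θ)
                have h2 := abs_add_le (y j - c θ) (c θ)
                simpa using h2.trans_eq' (by ring_nf)
            _ < θ + θ := add_lt_add this hc'
            _ = 2 * θ := by ring
        have hdy : dist y 0 < δk k := by
          rw [dist_zero_right]
          calc ‖y‖ < 2 * θ := hynorm
            _ < δ0 := hθδ
            _ ≤ δk k := hδ0le k
        have hclose := hδk2 k hy hdy
        rw [dist_eq_norm] at hclose
        rw [norm_mul, Complex.norm_real, Real.norm_eq_abs, abs_of_nonneg (hKnn y)]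
        calc K y * ‖f (x - y) - L k‖ ≤ K y * ε' :=
              mul_le_mul_of_nonneg_left hclose.le (hKnn y)
          _ = ε' * K y := mul_comm _ _
    calc ‖∫ y in orthant d k, ((K y : ℝ) : ℂ) * (f (x - y) - L k)‖
        ≤ ∫ y in orthant d k, ε' * K y := norm_integral_le_of_norm_le hgK hbound
      _ = ε' * ∫ y in orthant d k, K y := by rw [integral_const_mul]
      _ = ε' * W k := by rw [hWint k]
  calc ‖∑ k : Fin d → Fin 2, ∫ y in orthant d k, ((K y : ℝ) : ℂ) * (f (x - y) - L k)‖
      ≤ ∑ k : Fin d → Fin 2, ‖∫ y in orthant d k, ((K y : ℝ) : ℂ) * (f (x - y) - L k)‖ :=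
        norm_sum_le _ _
    _ ≤ ∑ k : Fin d → Fin 2, ε' * W k := Finset.sum_le_sum fun k _ => hterm k
    _ ≤ ∑ _k : Fin d → Fin 2, ε' * 1 := Finset.sum_le_sum fun k _ =>
        mul_le_mul_of_nonneg_left (hWle1 k) hε'.le
    _ = N * ε' := by rw [Finset.sum_const]; simp [hN, mul_comm]
    _ < ε := by
        have hN1 : (0:ℝ) < (N:ℝ) + 1 := by positivity
        rw [hε'def, mul_comm, div_mul_eq_mul_div, div_lt_iff₀ hN1]
        nlinarith [hε, Nat.cast_nonneg (α := ℝ) N]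
end

section
/- Let F be the ax+b group, realized as ℝ_{>0} × ℝ with multiplication (a,b)·(a',b') = (aa', ab'+b), identity (1,0), and left Haar measure dμ = a^{−2} da db. For 0 < θ < 1 define Φ_θ(a,b) = (a²/(πθ³))√(θ² − b²) when 1−θ < a < 1+θ and −θ ≤ b ≤ θ, and Φ_θ(a,b) = 0 otherwise. Then Φ_θ ≥ 0, ∫_F Φ_θ dμ = 1, Φ_θ is supported in [1−θ,1+θ] × [−θ,θ], so {Φ_θ}_{0<θ<1} is an approximate identity of L¹(F) as θ → 0⁺ and lim_{θ→0⁺} sup_{(a,b)∈𝒩ᶜ} |Φ_θ(a,b)| = 0 for every neighborhood 𝒩 of (1,0); moreover ∫_{A_j} Φ_θ dμ = 1/4 for j = 1,2,3,4, where A_1 = (0,1]×(−∞,0], A_2 = (0,1]×(0,∞), A_3 = (1,∞)×(−∞,0], A_4 = (1,∞)×(0,∞). -/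
open MeasureTheory Filter Topology Real

/-- The left Haar measure `a⁻² da db` of the `ax+b` group `F = ℝ_{>0} × ℝ`, realized on the
ambient space `ℝ × ℝ` by extending the density by `0` for `a ≤ 0`. -/
noncomputable def haarAffine : Measure (ℝ × ℝ) :=
  volume.withDensity fun p => if 0 < p.1 then ENNReal.ofReal ((p.1 ^ 2)⁻¹) else 0

/-- The kernel `Φ_θ(a,b) = (a²/(πθ³))√(θ² - b²)` for `1-θ < a < 1+θ`, `-θ ≤ b ≤ θ`,
and `0` otherwise. -/
noncomputable def affineKernel (θ : ℝ) (p : ℝ × ℝ) : ℝ :=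
  if 1 - θ < p.1 ∧ p.1 < 1 + θ ∧ -θ ≤ p.2 ∧ p.2 ≤ θ then
    p.1 ^ 2 / (π * θ ^ 3) * Real.sqrt (θ ^ 2 - p.2 ^ 2)
  else 0

/-- The local partition `A_1 = (0,1]×(-∞,0]`, `A_2 = (0,1]×(0,∞)`, `A_3 = (1,∞)×(-∞,0]`,
`A_4 = (1,∞)×(0,∞)` of the `ax+b` group. -/
def affinePartition : Fin 4 → Set (ℝ × ℝ) :=
  ![Set.Ioc 0 1 ×ˢ Set.Iic 0, Set.Ioc 0 1 ×ˢ Set.Ioi 0,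
    Set.Ioi 1 ×ˢ Set.Iic 0, Set.Ioi 1 ×ˢ Set.Ioi 0]

/-! ### Auxiliary material -/

/-- The density of `haarAffine`, as an `ℝ≥0`-valued function. -/
noncomputable def wAff (p : ℝ × ℝ) : NNReal :=
  if 0 < p.1 then Real.toNNReal ((p.1 ^ 2)⁻¹) else 0

lemma wAff_measurable : Measurable wAff := by
  apply Measurable.ite (measurableSet_lt measurable_const measurable_fst)
  · exact ((measurable_fst.pow_const 2).inv).real_toNNReal
  · exact measurable_const

lemma haarAffine_eq : haarAffine = volume.withDensity fun p => ((wAff p : NNReal) : ENNReal) := by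
  unfold haarAffine wAff
  congr 1
  funext p
  split <;> simp [ENNReal.ofReal]

lemma sqrt_continuous (θ : ℝ) : Continuous fun x : ℝ => Real.sqrt (θ ^ 2 - x ^ 2) :=
  (continuous_const.sub (continuous_pow 2)).sqrt

lemma sc_full {θ : ℝ} (hθ : 0 < θ) :
    ∫ x in (-θ)..θ, Real.sqrt (θ ^ 2 - x ^ 2) = π * θ ^ 2 / 2 := by
  have h := intervalIntegral.integral_comp_mul_left (a := -1) (b := 1)
    (fun x => Real.sqrt (θ ^ 2 - x ^ 2)) hθ.ne'
  have h2 : ∀ x : ℝ, Real.sqrt (θ ^ 2 - (θ * x) ^ 2) = θ * Real.sqrt (1 - x ^ 2) := by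
    intro x
    rw [show θ ^ 2 - (θ * x) ^ 2 = θ ^ 2 * (1 - x ^ 2) by ring,
      Real.sqrt_mul (sq_nonneg θ), Real.sqrt_sq hθ.le]
  simp only [h2] at h
  rw [intervalIntegral.integral_const_mul, integral_sqrt_one_sub_sq,
    show θ * -1 = -θ by ring, show θ * 1 = θ by ring, smul_eq_mul] at h
  have hθ' : θ ≠ 0 := hθ.ne'
  field_simp at h
  linarith

lemma sc_even (θ : ℝ) :
    ∫ x in (0:ℝ)..θ, Real.sqrt (θ ^ 2 - x ^ 2)
      = ∫ x in (-θ)..(0:ℝ), Real.sqrt (θ ^ 2 - x ^ 2) := by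
  have h := intervalIntegral.integral_comp_neg (a := (0:ℝ)) (b := θ)
    (fun x => Real.sqrt (θ ^ 2 - x ^ 2))
  simpa [neg_sq] using h

lemma sc_half_right {θ : ℝ} (hθ : 0 < θ) :
    ∫ x in (0:ℝ)..θ, Real.sqrt (θ ^ 2 - x ^ 2) = π * θ ^ 2 / 4 := by
  have hint : ∀ a b : ℝ, IntervalIntegrable (fun x => Real.sqrt (θ ^ 2 - x ^ 2)) volume a b :=
    fun a b => (sqrt_continuous θ).intervalIntegrable a b
  have hadd := intervalIntegral.integral_add_adjacent_intervals (a := -θ) (b := 0) (c := θ)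
    (hint _ _) (hint _ _)
  rw [sc_full hθ, ← sc_even θ] at hadd
  linarith

lemma sc_half_left {θ : ℝ} (hθ : 0 < θ) :
    ∫ x in (-θ)..(0:ℝ), Real.sqrt (θ ^ 2 - x ^ 2) = π * θ ^ 2 / 4 := by
  rw [← sc_even θ, sc_half_right hθ]

lemma support_subset_aux (θ : ℝ) :
    Function.support (affineKernel θ) ⊆ Set.Icc (1 - θ) (1 + θ) ×ˢ Set.Icc (-θ) θ := by
  intro p hp
  rw [Function.mem_support] at hp
  by_contra hmem
  apply hp
  rw [affineKernel, if_neg]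
  rintro ⟨h1, h2, h3, h4⟩
  exact hmem ⟨⟨h1.le, h2.le⟩, h3, h4⟩

/-- The pointwise factorization of the integrand. -/
lemma pointwise_eq (θ : ℝ) (hθ0 : 0 < θ) (hθ1 : θ < 1) (s t : Set ℝ) (p : ℝ × ℝ) :
    wAff p • (s ×ˢ t).indicator (affineKernel θ) p
      = (s ∩ Set.Ioo (1 - θ) (1 + θ)).indicator (fun _ => (1:ℝ)) p.1 *
        (t ∩ Set.Icc (-θ) θ).indicator
          (fun b => (π * θ ^ 3)⁻¹ * Real.sqrt (θ ^ 2 - b ^ 2)) p.2 := by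
  obtain ⟨a, b⟩ := p
  by_cases hc : 1 - θ < a ∧ a < 1 + θ ∧ -θ ≤ b ∧ b ≤ θ
  · obtain ⟨hc1, hc2, hc3, hc4⟩ := hc
    by_cases hab : (a, b) ∈ s ×ˢ t
    · have e1 : ((a, b).1) ∈ s ∩ Set.Ioo (1 - θ) (1 + θ) := ⟨hab.1, hc1, hc2⟩
      have e2 : ((a, b).2) ∈ t ∩ Set.Icc (-θ) θ := ⟨hab.2, hc3, hc4⟩
      rw [Set.indicator_of_mem hab, Set.indicator_of_mem e1, Set.indicator_of_mem e2]
      have ha : 0 < a := lt_of_le_of_lt (by linarith) hc1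
      have ha2 : (0:ℝ) ≤ (a ^ 2)⁻¹ := by positivity
      rw [affineKernel, if_pos ⟨hc1, hc2, hc3, hc4⟩]
      show wAff (a, b) • _ = _
      rw [wAff, if_pos (show 0 < (a, b).1 from ha), NNReal.smul_def,
        Real.coe_toNNReal _ ha2, one_mul]
      have ha' : (a:ℝ) ≠ 0 := ha.ne'
      simp only [smul_eq_mul]
      field_simp
    · rw [Set.indicator_of_notMem hab, smul_zero]
      rcases not_and_or.mp (by simpa [Set.mem_prod] using hab) with h | h
      · have hx : ((a, b).1) ∉ s ∩ Set.Ioo (1 - θ) (1 + θ) := fun hx => h hx.1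
        rw [Set.indicator_of_notMem hx, zero_mul]
      · have hx : ((a, b).2) ∉ t ∩ Set.Icc (-θ) θ := fun hx => h hx.1
        rw [Set.indicator_of_notMem hx, mul_zero]
  · have hk : affineKernel θ (a, b) = 0 := by rw [affineKernel, if_neg hc]
    have hL : (s ×ˢ t).indicator (affineKernel θ) (a, b) = 0 := by
      by_cases hab : (a, b) ∈ s ×ˢ t
      · rw [Set.indicator_of_mem hab, hk]
      · rw [Set.indicator_of_notMem hab]
    rw [hL, smul_zero]
    by_cases hIoo : a ∈ Set.Ioo (1 - θ) (1 + θ)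
    · have hIcc : ((a, b).2) ∉ t ∩ Set.Icc (-θ) θ :=
        fun h => hc ⟨hIoo.1, hIoo.2, h.2.1, h.2.2⟩
      rw [Set.indicator_of_notMem hIcc, mul_zero]
    · have hx : ((a, b).1) ∉ s ∩ Set.Ioo (1 - θ) (1 + θ) := fun h => hIoo h.2
      rw [Set.indicator_of_notMem hx, zero_mul]

/-- The key computation: the integral of the kernel over a product set. -/
lemma key_integral (θ : ℝ) (hθ0 : 0 < θ) (hθ1 : θ < 1) {s t : Set ℝ}
    (hs : MeasurableSet s) (ht : MeasurableSet t) :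
    ∫ p in s ×ˢ t, affineKernel θ p ∂haarAffine
      = (volume (s ∩ Set.Ioo (1 - θ) (1 + θ))).toReal *
        ((π * θ ^ 3)⁻¹ * ∫ b in t ∩ Set.Icc (-θ) θ, Real.sqrt (θ ^ 2 - b ^ 2)) := by
  rw [haarAffine_eq, ← integral_indicator (hs.prod ht),
    integral_withDensity_eq_integral_smul wAff_measurable]
  calc
    ∫ p : ℝ × ℝ, wAff p • (s ×ˢ t).indicator (affineKernel θ) p
      = ∫ p : ℝ × ℝ, (s ∩ Set.Ioo (1 - θ) (1 + θ)).indicator (fun _ => (1:ℝ)) p.1 *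
          (t ∩ Set.Icc (-θ) θ).indicator
            (fun b => (π * θ ^ 3)⁻¹ * Real.sqrt (θ ^ 2 - b ^ 2)) p.2 := by
        exact integral_congr_ae (Filter.Eventually.of_forall (pointwise_eq θ hθ0 hθ1 s t))
    _ = (∫ x : ℝ, (s ∩ Set.Ioo (1 - θ) (1 + θ)).indicator (fun _ => (1:ℝ)) x) *
          ∫ y : ℝ, (t ∩ Set.Icc (-θ) θ).indicator
            (fun b => (π * θ ^ 3)⁻¹ * Real.sqrt (θ ^ 2 - b ^ 2)) y := by
        rw [MeasureTheory.Measure.volume_eq_prod]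
        exact integral_prod_mul _ _
    _ = (volume (s ∩ Set.Ioo (1 - θ) (1 + θ))).toReal *
          ((π * θ ^ 3)⁻¹ * ∫ b in t ∩ Set.Icc (-θ) θ, Real.sqrt (θ ^ 2 - b ^ 2)) := by
        rw [integral_indicator (ht.inter measurableSet_Icc), integral_const_mul]
        congr 1
        simpa [measureReal_def, Pi.one_def] using integral_indicator_one (hs.inter measurableSet_Ioo)

lemma eventually_zero {N : Set (ℝ × ℝ)} (hN : N ∈ 𝓝 ((1 : ℝ), (0 : ℝ))) :
    ∀ᶠ θ : ℝ in 𝓝[>] 0, ∀ p ∈ Nᶜ, affineKernel θ p = 0 := by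
  obtain ⟨ε, hε, hball⟩ := Metric.mem_nhds_iff.1 hN
  filter_upwards [Ioo_mem_nhdsGT_of_mem (Set.mem_Ico.2 ⟨le_refl (0:ℝ), hε⟩)] with θ hθ p hp
  by_contra h
  apply hp
  apply hball
  have hmem := support_subset_aux θ (Function.mem_support.2 h)
  obtain ⟨⟨ha1, ha2⟩, hb1, hb2⟩ := hmem
  have hθε : θ < ε := hθ.2
  rw [Metric.mem_ball, Prod.dist_eq]
  show max (dist p.1 1) (dist p.2 0) < ε
  apply max_lt
  · rw [Real.dist_eq, abs_sub_lt_iff]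
    constructor
    · linarith
    · linarith
  · rw [Real.dist_eq, sub_zero, abs_lt]
    constructor
    · linarith
    · linarith

/-- `{Φ_θ}_{0<θ<1}` is an approximate identity of `L¹(F)` of the `ax+b` group `F`
(with identity `(1,0)` and left Haar measure `a⁻² da db`): each `Φ_θ` is nonnegative,
integrable with total integral `1`, supported in `[1-θ,1+θ] × [-θ,θ]`, satisfies
`∫_{A_j} Φ_θ dμ = 1/4` for the four sets of the local partition, and as `θ → 0⁺` both
`∫_{𝒩ᶜ} |Φ_θ| dμ → 0` and `sup_{𝒩ᶜ} |Φ_θ| → 0` (the latter in `ε`-form) for every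
neighborhood `𝒩` of `(1,0)`. -/
theorem affineKernel_approximate_identity :
    (∀ θ ∈ Set.Ioo (0 : ℝ) 1,
      (∀ p : ℝ × ℝ, 0 ≤ affineKernel θ p) ∧
      Integrable (affineKernel θ) haarAffine ∧
      (∫ p, affineKernel θ p ∂haarAffine) = 1 ∧
      Function.support (affineKernel θ) ⊆ Set.Icc (1 - θ) (1 + θ) ×ˢ Set.Icc (-θ) θ ∧
      (∀ j : Fin 4, (∫ p in affinePartition j, affineKernel θ p ∂haarAffine) = 1/4)) ∧
    (∀ N ∈ 𝓝 ((1 : ℝ), (0 : ℝ)),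
      Tendsto (fun θ : ℝ => ∫ p in Nᶜ, |affineKernel θ p| ∂haarAffine) (𝓝[>] 0) (𝓝 0)) ∧
    (∀ N ∈ 𝓝 ((1 : ℝ), (0 : ℝ)), ∀ ε > (0 : ℝ),
      ∀ᶠ θ : ℝ in 𝓝[>] 0, ∀ p ∈ Nᶜ, |affineKernel θ p| ≤ ε) := by
  have hπ : (0:ℝ) < π := Real.pi_pos
  refine ⟨fun θ hθ => ?_, fun N hN => ?_, fun N hN ε hε => ?_⟩
  · obtain ⟨hθ0, hθ1⟩ := hθ
    have hθ' : θ ≠ 0 := hθ0.ne'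
    refine ⟨?_, ?_, ?_, support_subset_aux θ, ?_⟩
    · intro p
      rw [affineKernel]
      split
      · have := hθ0
        positivity
      · exact le_refl 0
    · -- Integrability
      rw [haarAffine_eq, integrable_withDensity_iff_integrable_smul wAff_measurable]
      have heq : (fun p : ℝ × ℝ => wAff p • affineKernel θ p)
          = fun p : ℝ × ℝ => (Set.Ioo (1 - θ) (1 + θ)).indicator (fun _ => (1:ℝ)) p.1 *
            (Set.Icc (-θ) θ).indicator
              (fun b => (π * θ ^ 3)⁻¹ * Real.sqrt (θ ^ 2 - b ^ 2)) p.2 := by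
        funext p
        have h := pointwise_eq θ hθ0 hθ1 Set.univ Set.univ p
        simpa [Set.univ_prod_univ, Set.univ_inter] using h
      rw [heq, MeasureTheory.Measure.volume_eq_prod]
      apply Integrable.mul_prod
      · rw [integrable_indicator_iff measurableSet_Ioo]
        exact integrableOn_const (by simp [Real.volume_Ioo])
      · rw [integrable_indicator_iff measurableSet_Icc]
        exact (continuous_const.mul (sqrt_continuous θ)).integrableOn_Icc
    · -- Total integral = 1
      have h := key_integral θ hθ0 hθ1 (s := Set.univ) (t := Set.univ)
        MeasurableSet.univ MeasurableSet.univ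
      rw [Set.univ_prod_univ, Measure.restrict_univ, Set.univ_inter, Set.univ_inter] at h
      rw [h, integral_Icc_eq_integral_Ioc,
        ← intervalIntegral.integral_of_le (by linarith : -θ ≤ θ), sc_full hθ0,
        Real.volume_Ioo, show (1 + θ) - (1 - θ) = 2 * θ by ring,
        ENNReal.toReal_ofReal (by linarith)]
      field_simp
    · -- Partition integrals
      intro j
      have hIcc_left : Set.Iic (0:ℝ) ∩ Set.Icc (-θ) θ = Set.Icc (-θ) 0 := by
        ext x
        simp only [Set.mem_inter_iff, Set.mem_Iic, Set.mem_Icc]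
        constructor
        · rintro ⟨h1, h2, h3⟩; exact ⟨h2, h1⟩
        · rintro ⟨h1, h2⟩; exact ⟨h2, h1, by linarith⟩
      have hIcc_right : Set.Ioi (0:ℝ) ∩ Set.Icc (-θ) θ = Set.Ioc 0 θ := by
        ext x
        simp only [Set.mem_inter_iff, Set.mem_Ioi, Set.mem_Icc, Set.mem_Ioc]
        constructor
        · rintro ⟨h1, h2, h3⟩; exact ⟨h1, h3⟩
        · rintro ⟨h1, h2⟩; exact ⟨h1, by linarith, h2⟩
      have hIoo_left : Set.Ioc (0:ℝ) 1 ∩ Set.Ioo (1 - θ) (1 + θ) = Set.Ioc (1 - θ) 1 := by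
        ext x
        simp only [Set.mem_inter_iff, Set.mem_Ioc, Set.mem_Ioo]
        constructor
        · rintro ⟨⟨h1, h2⟩, h3, h4⟩; exact ⟨h3, h2⟩
        · rintro ⟨h1, h2⟩; exact ⟨⟨by linarith, h2⟩, h1, by linarith⟩
      have hIoo_right : Set.Ioi (1:ℝ) ∩ Set.Ioo (1 - θ) (1 + θ) = Set.Ioo 1 (1 + θ) := by
        ext x
        simp only [Set.mem_inter_iff, Set.mem_Ioi, Set.mem_Ioo]
        constructor
        · rintro ⟨h1, h2, h3⟩; exact ⟨h1, h3⟩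
        · rintro ⟨h1, h2⟩; exact ⟨h1, by linarith, h2⟩
      have hbL : (∫ b in Set.Iic (0:ℝ) ∩ Set.Icc (-θ) θ, Real.sqrt (θ ^ 2 - b ^ 2))
          = π * θ ^ 2 / 4 := by
        rw [hIcc_left, integral_Icc_eq_integral_Ioc,
          ← intervalIntegral.integral_of_le (by linarith : -θ ≤ (0:ℝ)), sc_half_left hθ0]
      have hbR : (∫ b in Set.Ioi (0:ℝ) ∩ Set.Icc (-θ) θ, Real.sqrt (θ ^ 2 - b ^ 2))
          = π * θ ^ 2 / 4 := by
        rw [hIcc_right, ← intervalIntegral.integral_of_le hθ0.le, sc_half_right hθ0]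
      have haL : (volume (Set.Ioc (0:ℝ) 1 ∩ Set.Ioo (1 - θ) (1 + θ))).toReal = θ := by
        rw [hIoo_left, Real.volume_Ioc, show (1:ℝ) - (1 - θ) = θ by ring,
          ENNReal.toReal_ofReal hθ0.le]
      have haR : (volume (Set.Ioi (1:ℝ) ∩ Set.Ioo (1 - θ) (1 + θ))).toReal = θ := by
        rw [hIoo_right, Real.volume_Ioo, show (1:ℝ) + θ - 1 = θ by ring,
          ENNReal.toReal_ofReal hθ0.le]
      have harith : θ * ((π * θ ^ 3)⁻¹ * (π * θ ^ 2 / 4)) = 1 / 4 := by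
        field_simp
      fin_cases j
      · show (∫ p in Set.Ioc (0:ℝ) 1 ×ˢ Set.Iic (0:ℝ), affineKernel θ p ∂haarAffine) = 1/4
        rw [key_integral θ hθ0 hθ1 measurableSet_Ioc measurableSet_Iic, hbL, haL, harith]
      · show (∫ p in Set.Ioc (0:ℝ) 1 ×ˢ Set.Ioi (0:ℝ), affineKernel θ p ∂haarAffine) = 1/4
        rw [key_integral θ hθ0 hθ1 measurableSet_Ioc measurableSet_Ioi, hbR, haL, harith]
      · show (∫ p in Set.Ioi (1:ℝ) ×ˢ Set.Iic (0:ℝ), affineKernel θ p ∂haarAffine) = 1/4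
        rw [key_integral θ hθ0 hθ1 measurableSet_Ioi measurableSet_Iic, hbL, haR, harith]
      · show (∫ p in Set.Ioi (1:ℝ) ×ˢ Set.Ioi (0:ℝ), affineKernel θ p ∂haarAffine) = 1/4
        rw [key_integral θ hθ0 hθ1 measurableSet_Ioi measurableSet_Ioi, hbR, haR, harith]
  · -- integral tail tends to 0
    have hev := eventually_zero hN
    have hcong : (fun θ : ℝ => ∫ p in Nᶜ, |affineKernel θ p| ∂haarAffine) =ᶠ[𝓝[>] 0]
        fun _ => (0:ℝ) := by
      filter_upwards [hev] with θ hθ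
      exact setIntegral_eq_zero_of_forall_eq_zero fun p hp => by rw [hθ p hp, abs_zero]
    exact Tendsto.congr' hcong.symm tendsto_const_nhds
  · -- sup tail ≤ ε eventually
    filter_upwards [eventually_zero hN] with θ hθ p hp
    rw [hθ p hp, abs_zero]
    exact hε.le
end
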